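/- arXiv:1607.06808 — 4 statements merged into one kernel-verified Lean document; each statement's English description precedes it below -/
import Mathlib

section
/- The number of 2m-step closed walks at the origin in the restricted two-dimensional lattice L{x ≥ y} equals C_m · C(2m,m) = C(2m,m)²/(m+1), where C_m is the m-th Catalan number; odd-step closed walk counts are 0. -/
/-- The one-dimensional integer lattice: `x ∼ y` iff `|x - y| = 1`. -/
def latZ : SimpleGraph ℤ where
  Adj x y := |x - y| = 1
  symm := ⟨by intro x y h; rwa [abs_sub_comm]⟩
  loopless := ⟨by intro x h; simp at h⟩

/-- The half-line graph on `ℕ = {0,1,2,...}`: `x ∼ y` iff `|x - y| = 1`. -/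
def latN : SimpleGraph ℕ where
  Adj x y := |(x : ℤ) - y| = 1
  symm := ⟨by intro x y h; rwa [abs_sub_comm]⟩
  loopless := ⟨by intro x h; simp at h⟩

/-- The number of `m`-step closed walks at `o` in `G`. -/
noncomputable def walkCount {V : Type*} (G : SimpleGraph V) (o : V) (m : ℕ) : ℕ :=
  Nat.card {w : G.Walk o o // w.length = m}
open List

namespace WalkEnc

variable {V : Type*} {S : Type*} (G : SimpleGraph V) (nx : V → S → V) (ok : V → S → Prop)

def Valid : V → List S → Prop
  | _, [] => True
  | v, s :: t => ok v s ∧ Valid (nx v s) t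

def endP : V → List S → V
  | v, [] => v
  | v, s :: t => endP (nx v s) t

variable {G nx ok}

lemma valid_nil (v : V) : Valid nx ok v [] := trivial

lemma valid_cons {v : V} {s : S} {t : List S} :
    Valid nx ok v (s :: t) ↔ ok v s ∧ Valid nx ok (nx v s) t := Iff.rfl

lemma endP_nil (v : V) : endP nx v [] = v := rfl

lemma endP_cons (v : V) (s : S) (t : List S) :
    endP nx v (s :: t) = endP nx (nx v s) t := rfl

section

variable (hexi : ∀ ⦃v w⦄, G.Adj v w → ∃ s, ok v s ∧ nx v s = w)
variable (hadj : ∀ v s, ok v s → G.Adj v (nx v s))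

noncomputable def encode : ∀ {a b : V}, G.Walk a b → List S
  | _, _, .nil => []
  | _, _, .cons h w => (hexi h).choose :: encode w

lemma length_encode : ∀ {a b : V} (w : G.Walk a b), (encode hexi w).length = w.length
  | _, _, .nil => rfl
  | _, _, .cons h w => by simp [encode, length_encode w]

lemma valid_encode : ∀ {a b : V} (w : G.Walk a b), Valid nx ok a (encode hexi w)
  | _, _, .nil => trivial
  | _, _, .cons h w => ⟨(hexi h).choose_spec.1, by
      rw [(hexi h).choose_spec.2]; exact valid_encode w⟩

lemma endP_encode : ∀ {a b : V} (w : G.Walk a b), endP nx a (encode hexi w) = b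
  | _, _, .nil => rfl
  | _, _, .cons h w => by
      show endP nx (nx _ _) (encode hexi w) = _
      rw [(hexi h).choose_spec.2]; exact endP_encode w

def decode : ∀ (a : V) (l : List S), Valid nx ok a l → G.Walk a (endP nx a l)
  | _, [], _ => .nil
  | a, s :: t, h => .cons (hadj a s h.1) (decode (nx a s) t h.2)

lemma length_decode : ∀ (a : V) (l : List S) (h : Valid nx ok a l),
    (decode hadj a l h).length = l.length
  | _, [], _ => rfl
  | a, s :: t, h => by exact congrArg Nat.succ (length_decode (nx a s) t h.2)

lemma encode_decode (huni : ∀ v s t, ok v s → ok v t → nx v s = nx v t → s = t) :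
    ∀ (a : V) (l : List S) (h : Valid nx ok a l),
    encode hexi (decode hadj a l h) = l
  | _, [], _ => rfl
  | a, s :: t, h => by
      simp only [decode, encode, List.cons.injEq]
      refine ⟨huni a _ s (hexi (hadj a s h.1)).choose_spec.1 h.1
        (hexi (hadj a s h.1)).choose_spec.2, encode_decode huni (nx a s) t h.2⟩

lemma encode_inj : ∀ {a b : V} (w₁ w₂ : G.Walk a b),
    encode hexi w₁ = encode hexi w₂ → w₁ = w₂ := by
  intro a b w₁
  induction w₁ with
  | nil =>
    intro w₂ h
    cases w₂ with
    | nil => rfl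
    | cons h₂ w₂ => simp [encode] at h
  | cons h₁ w₁ ih =>
    intro w₂ hw
    cases w₂ with
    | nil => simp [encode] at hw
    | cons h₂ w₂ =>
      simp only [encode, List.cons.injEq] at hw
      obtain ⟨hs, ht⟩ := hw
      have hc := ((hexi h₁).choose_spec.2).symm.trans (hs ▸ (hexi h₂).choose_spec.2)
      subst hc
      obtain rfl := ih w₂ ht
      rfl

lemma encode_copy {a b a' b' : V} (w : G.Walk a b) (h : a = a') (h' : b = b') :
    encode hexi (w.copy h h') = encode hexi w := by subst h h'; rfl

noncomputable def stepsEquiv (huni : ∀ v s t, ok v s → ok v t → nx v s = nx v t → s = t)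
    (a b : V) (n : ℕ) :
    {w : G.Walk a b // w.length = n} ≃
      {l : List S // l.length = n ∧ Valid nx ok a l ∧ endP nx a l = b} := by
  apply Equiv.ofBijective (fun w => ⟨encode hexi w.1,
    by rw [length_encode]; exact w.2, valid_encode hexi w.1, endP_encode hexi w.1⟩)
  constructor
  · intro w₁ w₂ h
    exact Subtype.ext (encode_inj hexi w₁.1 w₂.1 (congrArg Subtype.val h))
  · rintro ⟨l, hlen, hv, he⟩
    refine ⟨⟨(decode hadj a l hv).copy rfl he, ?_⟩, ?_⟩
    · rw [SimpleGraph.Walk.length_copy, length_decode]; exact hlen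
    · apply Subtype.ext
      simp only
      rw [encode_copy, encode_decode hexi hadj huni]

end

end WalkEnc
/-- step functions -/
abbrev nZ (v : ℤ) : Bool → ℤ
  | true => v + 1
  | false => v - 1
abbrev okZ (_ : ℤ) (_ : Bool) : Prop := True
abbrev nN (v : ℕ) : Bool → ℕ
  | true => v + 1
  | false => v - 1
abbrev okN (v : ℕ) (s : Bool) : Prop := s = true ∨ v ≠ 0

lemma latZ_adj {v w : ℤ} : latZ.Adj v w ↔ w = v + 1 ∨ w = v - 1 := by
  show |v - w| = 1 ↔ _
  rw [abs_eq (by norm_num : (0:ℤ) ≤ 1)]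
  omega

lemma latN_adj {v w : ℕ} : latN.Adj v w ↔ w = v + 1 ∨ (v ≠ 0 ∧ w = v - 1) := by
  show |(v:ℤ) - w| = 1 ↔ _
  rw [abs_eq (by norm_num : (0:ℤ) ≤ 1)]
  omega

lemma hexiZ : ∀ ⦃v w : ℤ⦄, latZ.Adj v w → ∃ s, okZ v s ∧ nZ v s = w := by
  intro v w h
  rcases latZ_adj.1 h with h | h
  · exact ⟨true, trivial, h.symm⟩
  · exact ⟨false, trivial, h.symm⟩

lemma hadjZ : ∀ (v : ℤ) (s : Bool), okZ v s → latZ.Adj v (nZ v s) := by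
  intro v s _
  cases s <;> simp [latZ_adj, nZ]

lemma huniZ : ∀ (v : ℤ) (s t : Bool), okZ v s → okZ v t → nZ v s = nZ v t → s = t := by
  intro v s t _ _ h
  cases s <;> cases t <;> simp [nZ] at h ⊢ <;> omega

lemma hexiN : ∀ ⦃v w : ℕ⦄, latN.Adj v w → ∃ s, okN v s ∧ nN v s = w := by
  intro v w h
  rcases latN_adj.1 h with h | ⟨h0, h⟩
  · exact ⟨true, Or.inl rfl, h.symm⟩
  · exact ⟨false, Or.inr h0, h.symm⟩

lemma hadjN : ∀ (v : ℕ) (s : Bool), okN v s → latN.Adj v (nN v s) := by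
  intro v s h
  cases s
  · have hv : v ≠ 0 := h.resolve_left (by simp)
    rw [show nN v false = v - 1 from rfl, latN_adj]
    omega
  · rw [show nN v true = v + 1 from rfl, latN_adj]
    omega

lemma huniN : ∀ (v : ℕ) (s t : Bool), okN v s → okN v t → nN v s = nN v t → s = t := by
  intro v s t hs ht h
  cases s <;> cases t <;> simp_all [nN, okN] <;> omega

/-- the region and the induced graph -/
abbrev Reg : Set (ℤ × ℤ) := {p : ℤ × ℤ | p.2 ≤ p.1}

abbrev Gind : SimpleGraph Reg := (latZ □ latZ).induce {p : ℤ × ℤ | p.2 ≤ p.1}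

def tgt (p : ℤ × ℤ) : Bool × Bool → ℤ × ℤ
  | (true, true) => (p.1 + 1, p.2)
  | (false, false) => (p.1 - 1, p.2)
  | (false, true) => (p.1, p.2 + 1)
  | (true, false) => (p.1, p.2 - 1)

def okI (p : Reg) (s : Bool × Bool) : Prop := (tgt p.1 s).2 ≤ (tgt p.1 s).1

noncomputable def nxI (p : Reg) (s : Bool × Bool) : Reg :=
  if h : (tgt p.1 s).2 ≤ (tgt p.1 s).1 then ⟨tgt p.1 s, h⟩ else p

lemma boxAdj {p q : ℤ × ℤ} : (latZ □ latZ).Adj p q ↔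
    ((q.1 = p.1 + 1 ∨ q.1 = p.1 - 1) ∧ q.2 = p.2) ∨
      ((q.2 = p.2 + 1 ∨ q.2 = p.2 - 1) ∧ q.1 = p.1) := by
  rw [SimpleGraph.boxProd_adj]
  simp only [latZ_adj]
  omega

lemma hadjI : ∀ (p : Reg) (s : Bool × Bool), okI p s → Gind.Adj p (nxI p s) := by
  rintro ⟨⟨x, y⟩, hp⟩ ⟨s₁, s₂⟩ h
  have hp' : y ≤ x := hp
  simp only [okI] at h
  simp only [nxI, dif_pos h]
  show (latZ □ latZ).Adj _ _
  rw [boxAdj]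
  cases s₁ <;> cases s₂ <;> simp [tgt] <;> omega

lemma hexiI : ∀ ⦃p q : Reg⦄, Gind.Adj p q → ∃ s, okI p s ∧ nxI p s = q := by
  rintro ⟨⟨x, y⟩, hp⟩ ⟨⟨x', y'⟩, hq⟩ h
  have hq' : y' ≤ x' := hq
  have h' := boxAdj.1 h
  simp only [Function.Embedding.coe_subtype] at h'
  have pick : ∀ s : Bool × Bool, tgt (x, y) s = (x', y') → ∃ s, okI (⟨(x,y),hp⟩ : Reg) s ∧ nxI ⟨(x,y),hp⟩ s = ⟨(x',y'),hq⟩ := by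
    intro s hs
    refine ⟨s, ?_, ?_⟩
    · show (tgt (x,y) s).2 ≤ (tgt (x,y) s).1
      rw [hs]; exact hq'
    · have hok : (tgt ((⟨(x,y),hp⟩ : Reg) : ℤ × ℤ) s).2 ≤ (tgt ((⟨(x,y),hp⟩ : Reg) : ℤ × ℤ) s).1 := by
        show (tgt (x,y) s).2 ≤ (tgt (x,y) s).1
        rw [hs]; exact hq'
      simp only [nxI, dif_pos hok]
      exact Subtype.ext hs
  rcases h' with ⟨h1 | h1, h2⟩ | ⟨h1 | h1, h2⟩
  · exact pick (true, true) (by simp [tgt, Prod.ext_iff]; omega)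
  · exact pick (false, false) (by simp [tgt, Prod.ext_iff]; omega)
  · exact pick (false, true) (by simp [tgt, Prod.ext_iff]; omega)
  · exact pick (true, false) (by simp [tgt, Prod.ext_iff]; omega)

lemma huniI : ∀ (p : Reg) (s t : Bool × Bool), okI p s → okI p t → nxI p s = nxI p t → s = t := by
  rintro ⟨⟨x, y⟩, hp⟩ ⟨s₁, s₂⟩ ⟨t₁, t₂⟩ hs ht h
  simp only [okI] at hs ht
  simp only [nxI, dif_pos hs, dif_pos ht] at h
  have h' : tgt (x, y) (s₁, s₂) = tgt (x, y) (t₁, t₂) := congrArg Subtype.val h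
  cases s₁ <;> cases s₂ <;> cases t₁ <;> cases t₂ <;>
    simp_all [tgt, Prod.ext_iff] <;> omega
def uOf (p : Reg) : ℕ := (p.1.1 - p.1.2).toNat
def vOf (p : Reg) : ℤ := p.1.1 + p.1.2

lemma step_ok (p : Reg) (s : Bool × Bool) : okI p s ↔ okN (uOf p) s.1 := by
  rcases p with ⟨⟨x, y⟩, hp⟩
  have hp' : y ≤ x := hp
  rcases s with ⟨s₁, s₂⟩
  cases s₁ <;> cases s₂ <;> simp [okI, okN, uOf, tgt] <;> omega

lemma step_next (p : Reg) (s : Bool × Bool) (h : okI p s) :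
    uOf (nxI p s) = nN (uOf p) s.1 ∧ vOf (nxI p s) = nZ (vOf p) s.2 := by
  rcases p with ⟨⟨x, y⟩, hp⟩
  have hp' : y ≤ x := hp
  simp only [okI] at h
  simp only [nxI, dif_pos h]
  rcases s with ⟨s₁, s₂⟩
  simp only [okI, tgt] at h
  cases s₁ <;> cases s₂ <;>
    simp_all [uOf, vOf, tgt, nN, nZ] <;> omega

lemma validI_iff : ∀ (l : List (Bool × Bool)) (p : Reg),
    WalkEnc.Valid nxI okI p l ↔ WalkEnc.Valid nN okN (uOf p) (l.map Prod.fst) := by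
  intro l
  induction l with
  | nil => intro p; simp [WalkEnc.Valid]
  | cons s t ih =>
    intro p
    rw [List.map_cons, WalkEnc.valid_cons, WalkEnc.valid_cons]
    constructor
    · rintro ⟨h1, h2⟩
      refine ⟨(step_ok p s).1 h1, ?_⟩
      rw [← (step_next p s h1).1]
      exact (ih _).1 h2
    · rintro ⟨h1, h2⟩
      have h1' := (step_ok p s).2 h1
      refine ⟨h1', (ih _).2 ?_⟩
      rw [(step_next p s h1').1]
      exact h2

lemma endPI_eq : ∀ (l : List (Bool × Bool)) (p : Reg), WalkEnc.Valid nxI okI p l →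
    uOf (WalkEnc.endP nxI p l) = WalkEnc.endP nN (uOf p) (l.map Prod.fst) ∧
      vOf (WalkEnc.endP nxI p l) = WalkEnc.endP nZ (vOf p) (l.map Prod.snd) := by
  intro l
  induction l with
  | nil => intro p _; simp [WalkEnc.endP]
  | cons s t ih =>
    intro p hv
    rw [WalkEnc.valid_cons] at hv
    obtain ⟨h1, h2⟩ := hv
    rw [List.map_cons, List.map_cons, WalkEnc.endP_cons, WalkEnc.endP_cons, WalkEnc.endP_cons,
      ← (step_next p s h1).1, ← (step_next p s h1).2]
    exact ih _ h2

def oo : Reg := ⟨(0, 0), by simp⟩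

lemma uOf_oo : uOf oo = 0 := rfl
lemma vOf_oo : vOf oo = 0 := rfl

lemma origin_unique (p : Reg) (hu : uOf p = 0) (hv : vOf p = 0) : p = oo := by
  rcases p with ⟨⟨x, y⟩, hp⟩
  have hp' : y ≤ x := hp
  simp only [uOf, vOf] at hu hv
  have hx : x = 0 := by omega
  have hy : y = 0 := by omega
  apply Subtype.ext
  simp only [oo]
  rw [hx, hy]

lemma validZ : ∀ (l : List Bool) (v : ℤ), WalkEnc.Valid nZ okZ v l := by
  intro l
  induction l with
  | nil => intro v; trivial
  | cons s t ih => intro v; exact ⟨trivial, ih _⟩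

noncomputable def pairEquiv (n : ℕ) :
    {l : List (Bool × Bool) // l.length = n ∧ WalkEnc.Valid nxI okI oo l ∧
        WalkEnc.endP nxI oo l = oo} ≃
      {l : List Bool // l.length = n ∧ WalkEnc.Valid nN okN 0 l ∧ WalkEnc.endP nN 0 l = 0} ×
        {l : List Bool // l.length = n ∧ WalkEnc.Valid nZ okZ 0 l ∧ WalkEnc.endP nZ 0 l = 0} where
  toFun l := by
    refine ⟨⟨l.1.map Prod.fst, by simp [l.2.1], ?_, ?_⟩,
      ⟨l.1.map Prod.snd, by simp [l.2.1], validZ _ _, ?_⟩⟩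
    · have := (validI_iff l.1 oo).1 l.2.2.1
      rwa [uOf_oo] at this
    · have := (endPI_eq l.1 oo l.2.2.1).1
      rw [l.2.2.2, uOf_oo] at this
      exact this.symm
    · have := (endPI_eq l.1 oo l.2.2.1).2
      rw [l.2.2.2, vOf_oo] at this
      exact this.symm
  invFun q := by
    have hlen : q.1.1.length = q.2.1.length := by rw [q.1.2.1, q.2.2.1]
    have hmf : (q.1.1.zip q.2.1).map Prod.fst = q.1.1 := List.map_fst_zip hlen.le
    have hms : (q.1.1.zip q.2.1).map Prod.snd = q.2.1 := List.map_snd_zip hlen.ge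
    have hv : WalkEnc.Valid nxI okI oo (q.1.1.zip q.2.1) := by
      rw [validI_iff, uOf_oo, hmf]
      exact q.1.2.2.1
    refine ⟨q.1.1.zip q.2.1, by rw [List.length_zip, q.1.2.1, q.2.2.1, min_self], hv, ?_⟩
    apply origin_unique
    · rw [(endPI_eq _ oo hv).1, uOf_oo, hmf]
      exact q.1.2.2.2
    · rw [(endPI_eq _ oo hv).2, vOf_oo, hms]
      exact q.2.2.2.2
  left_inv l := by
    apply Subtype.ext
    simp only
    rw [List.zip_map']
    simp
  right_inv q := by
    have hlen : q.1.1.length = q.2.1.length := by rw [q.1.2.1, q.2.2.1]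
    refine Prod.ext (Subtype.ext ?_) (Subtype.ext ?_)
    · exact List.map_fst_zip hlen.le
    · exact List.map_snd_zip hlen.ge
lemma count_sum : ∀ l : List Bool, l.count true + l.count false = l.length := by
  intro l
  induction l with
  | nil => simp
  | cons s t ih => cases s <;> simp [List.count_cons] <;> omega

lemma endPZ_eq : ∀ (l : List Bool) (v : ℤ),
    WalkEnc.endP nZ v l = v + (l.count true : ℤ) - (l.count false : ℤ) := by
  intro l
  induction l with
  | nil => intro v; simp [WalkEnc.endP]
  | cons s t ih =>
    intro v
    rw [WalkEnc.endP_cons, ih]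
    cases s <;> simp [nZ, List.count_cons] <;> push_cast <;> ring

lemma validN_iff : ∀ (l : List Bool) (u : ℕ),
    WalkEnc.Valid nN okN u l ↔ ∀ i, (l.take i).count false ≤ u + (l.take i).count true := by
  intro l
  induction l with
  | nil => intro u; simp [WalkEnc.Valid]
  | cons s t ih =>
    intro u
    rw [WalkEnc.valid_cons]
    cases s
    · constructor
      · rintro ⟨h1, h2⟩ i
        have hu : u ≠ 0 := h1.resolve_left (by simp)
        cases i with
        | zero => simp
        | succ j =>
          have := (ih _).1 h2 j
          simp [List.take_succ_cons, List.count_cons, nN] at this ⊢ <;> omega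
      · intro h
        have hu : u ≠ 0 := by have := h 1; simp [List.count_cons] at this; omega
        refine ⟨Or.inr hu, (ih _).2 fun j => ?_⟩
        have := h (j + 1)
        simp [List.take_succ_cons, List.count_cons, nN] at this ⊢ <;> omega
    · constructor
      · rintro ⟨h1, h2⟩ i
        cases i with
        | zero => simp
        | succ j =>
          have := (ih _).1 h2 j
          simp [List.take_succ_cons, List.count_cons, nN] at this ⊢ <;> omega
      · intro h
        refine ⟨Or.inl rfl, (ih _).2 fun j => ?_⟩
        have := h (j + 1)
        simp [List.take_succ_cons, List.count_cons, nN] at this ⊢ <;> omega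

lemma endPN_eq : ∀ (l : List Bool) (u : ℕ), WalkEnc.Valid nN okN u l →
    WalkEnc.endP nN u l + l.count false = u + l.count true := by
  intro l
  induction l with
  | nil => intro u _; simp [WalkEnc.endP]
  | cons s t ih =>
    intro u hv
    rw [WalkEnc.valid_cons] at hv
    obtain ⟨h1, h2⟩ := hv
    have := ih _ h2
    rw [WalkEnc.endP_cons]
    cases s
    · have hu : u ≠ 0 := h1.resolve_left (by simp)
      simp [List.count_cons, nN] at this ⊢ <;> omega
    · simp [List.count_cons, nN] at this ⊢ <;> omega
lemma count_ofFn : ∀ (n : ℕ) (f : Fin n → Bool),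
    (List.ofFn f).count true = (Finset.univ.filter (fun i => f i = true)).card := by
  intro n
  induction n with
  | zero => intro f; simp
  | succ n ih =>
    intro f
    conv_rhs => rw [Finset.card_filter, Fin.sum_univ_succ]
    rw [List.ofFn_succ, List.count_cons, ih, Finset.card_filter]
    simp [add_comm]

lemma ofFn_getD (n : ℕ) (l : List Bool) (h : l.length = n) :
    List.ofFn (fun i : Fin n => l.getD i false) = l := by
  subst h
  conv_rhs => rw [← List.ofFn_getElem (xs := l)]
  congr 1
  funext i
  exact List.getD_eq_getElem l false i.isLt

noncomputable def boolFinsetEquiv (n m : ℕ) :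
    {l : List Bool // l.length = n ∧ l.count true = m} ≃
      {s : Finset (Fin n) // s.card = m} where
  toFun l := ⟨Finset.univ.filter (fun i : Fin n => l.1.getD i false = true), by
    rw [← count_ofFn n, ofFn_getD n l.1 l.2.1]; exact l.2.2⟩
  invFun s := ⟨List.ofFn (fun i => decide ((i : Fin n) ∈ s.1)), by
    refine ⟨List.length_ofFn, ?_⟩
    rw [count_ofFn]
    simp only [decide_eq_true_eq]
    rw [Finset.filter_univ_mem]
    exact s.2⟩
  left_inv l := by
    apply Subtype.ext
    simp only
    conv_rhs => rw [← ofFn_getD n l.1 l.2.1]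
    congr 1
    funext i
    simp [Finset.mem_filter]
  right_inv s := by
    apply Subtype.ext
    simp only
    ext i
    simp only [Finset.mem_filter, Finset.mem_univ, true_and]
    rw [List.getD_eq_getElem _ false (by simpa using i.isLt)]
    simp

lemma card_bool_lists (n m : ℕ) :
    Nat.card {l : List Bool // l.length = n ∧ l.count true = m} = n.choose m := by
  rw [Nat.card_congr (boolFinsetEquiv n m), Nat.card_eq_fintype_card,
    Fintype.card_finset_len, Fintype.card_fin]

lemma cardZ_even (m : ℕ) :
    Nat.card {l : List Bool // l.length = 2 * m ∧ WalkEnc.Valid nZ okZ 0 l ∧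
      WalkEnc.endP nZ 0 l = 0} = (2 * m).choose m := by
  rw [← card_bool_lists (2 * m) m]
  apply Nat.card_congr
  apply Equiv.subtypeEquivRight
  intro l
  constructor
  · rintro ⟨h1, _, h3⟩
    rw [endPZ_eq] at h3
    have := count_sum l
    refine ⟨h1, by omega⟩
  · rintro ⟨h1, h2⟩
    have := count_sum l
    refine ⟨h1, validZ _ _, ?_⟩
    rw [endPZ_eq]
    omega

lemma cardZ_odd (m : ℕ) :
    Nat.card {l : List Bool // l.length = 2 * m + 1 ∧ WalkEnc.Valid nZ okZ 0 l ∧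
      WalkEnc.endP nZ 0 l = 0} = 0 := by
  rw [Nat.card_eq_zero]
  left
  refine ⟨fun l => ?_⟩
  obtain ⟨h1, _, h3⟩ := l.2
  rw [endPZ_eq] at h3
  have := count_sum l.1
  omega

/-- Dyck word side -/
def bts : Bool → DyckStep
  | true => DyckStep.U
  | false => DyckStep.D

def stb : DyckStep → Bool
  | DyckStep.U => true
  | DyckStep.D => false

lemma bts_inj : Function.Injective bts := by
  intro a b h
  cases a <;> cases b <;> simp [bts] at h ⊢

lemma stb_inj : Function.Injective stb := by
  intro a b h
  cases a <;> cases b <;> simp [stb] at h ⊢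

lemma stb_bts : ∀ b, stb (bts b) = b := by intro b; cases b <;> rfl

lemma bts_stb : ∀ s, bts (stb s) = s := by intro s; cases s <;> rfl

noncomputable def dyckEquiv (m : ℕ) :
    {l : List Bool // l.length = 2 * m ∧ WalkEnc.Valid nN okN 0 l ∧
      WalkEnc.endP nN 0 l = 0} ≃ {p : DyckWord // p.semilength = m} where
  toFun l := by
    have hval := (validN_iff l.1 0).1 l.2.2.1
    have hend := endPN_eq l.1 0 l.2.2.1
    rw [l.2.2.2] at hend
    have hsum := count_sum l.1
    refine ⟨⟨l.1.map bts, ?_, ?_⟩, ?_⟩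
    · rw [show DyckStep.U = bts true from rfl, show DyckStep.D = bts false from rfl,
        List.count_map_of_injective _ bts bts_inj, List.count_map_of_injective _ bts bts_inj]
      omega
    · intro i
      rw [← List.map_take, show DyckStep.U = bts true from rfl,
        show DyckStep.D = bts false from rfl,
        List.count_map_of_injective _ bts bts_inj, List.count_map_of_injective _ bts bts_inj]
      have := hval i
      omega
    · show (l.1.map bts).count DyckStep.U = m
      rw [show DyckStep.U = bts true from rfl, List.count_map_of_injective _ bts bts_inj]
      have := l.2.1
      omega
  invFun p := by
    have hUD := p.1.count_U_eq_count_D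
    have hpre := p.1.count_D_le_count_U
    have hlen := p.1.two_mul_semilength_eq_length
    have hct : (p.1.toList.map stb).count true = p.1.toList.count DyckStep.U := by
      rw [show true = stb DyckStep.U from rfl, List.count_map_of_injective _ stb stb_inj]
    have hcf : (p.1.toList.map stb).count false = p.1.toList.count DyckStep.D := by
      rw [show false = stb DyckStep.D from rfl, List.count_map_of_injective _ stb stb_inj]
    have hv : WalkEnc.Valid nN okN 0 (p.1.toList.map stb) := by
      rw [validN_iff]
      intro i
      rw [← List.map_take]
      rw [show true = stb DyckStep.U from rfl, show false = stb DyckStep.D from rfl,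
        List.count_map_of_injective _ stb stb_inj, List.count_map_of_injective _ stb stb_inj]
      simpa using hpre i
    refine ⟨p.1.toList.map stb, ?_, hv, ?_⟩
    · rw [List.length_map, ← hlen, p.2]
    · have := endPN_eq _ 0 hv
      omega
  left_inv l := by
    apply Subtype.ext
    simp only [List.map_map]
    have : stb ∘ bts = id := funext stb_bts
    rw [this, List.map_id]
  right_inv p := by
    apply Subtype.ext
    apply DyckWord.ext
    simp only [List.map_map]
    have : bts ∘ stb = id := funext bts_stb
    rw [this, List.map_id]

lemma cardN (m : ℕ) :
    Nat.card {l : List Bool // l.length = 2 * m ∧ WalkEnc.Valid nN okN 0 l ∧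
      WalkEnc.endP nN 0 l = 0} = catalan m := by
  rw [Nat.card_congr (dyckEquiv m), Nat.card_eq_fintype_card]
  exact DyckWord.card_dyckWord_semilength_eq_catalan m

theorem walkCount_xgey (m : ℕ) :
    walkCount ((latZ □ latZ).induce {p : ℤ × ℤ | p.2 ≤ p.1}) ⟨(0, 0), by simp⟩ (2 * m)
        = catalan m * Nat.choose (2 * m) m ∧
      walkCount ((latZ □ latZ).induce {p : ℤ × ℤ | p.2 ≤ p.1}) ⟨(0, 0), by simp⟩ (2 * m + 1)
        = 0 := by
  constructor
  · show Nat.card {w : Gind.Walk oo oo // w.length = 2 * m} = _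
    rw [Nat.card_congr (WalkEnc.stepsEquiv hexiI hadjI huniI oo oo (2 * m)),
      Nat.card_congr (pairEquiv (2 * m)), Nat.card_prod, cardN, cardZ_even]
  · show Nat.card {w : Gind.Walk oo oo // w.length = 2 * m + 1} = _
    rw [Nat.card_congr (WalkEnc.stepsEquiv hexiI hadjI huniI oo oo (2 * m + 1)),
      Nat.card_congr (pairEquiv (2 * m + 1)), Nat.card_prod, cardZ_odd, mul_zero]
end

section
/- The connected component of the Kronecker product ℤ₊ ×_K ℤ₊ containing (0,0) is graph-isomorphic to the restricted lattice L{(x,y) ∈ ℤ² : x ≥ y ≥ -x}, with the origin mapped to the origin. -/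
def SimpleGraph.kron {V₁ V₂ : Type*} (G₁ : SimpleGraph V₁) (G₂ : SimpleGraph V₂) :
    SimpleGraph (V₁ × V₂) where
  Adj p q := G₁.Adj p.1 q.1 ∧ G₂.Adj p.2 q.2
  symm := ⟨fun _ _ h => ⟨h.1.symm, h.2.symm⟩⟩
  loopless := ⟨fun p h => h.1.ne rfl⟩

/-- The connected component of `G` containing `o`, as the induced subgraph on the
set of vertices reachable from `o`. -/
def component {V : Type*} (G : SimpleGraph V) (o : V) : SimpleGraph {v // G.Reachable o v} :=
  G.induce {v | G.Reachable o v}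

lemma latN_adj_s16 {a b : ℕ} : latN.Adj a b ↔ (a = b + 1 ∨ b = a + 1) := by
  show |(a:ℤ) - b| = 1 ↔ _
  rw [abs_eq (by norm_num : (0:ℤ) ≤ 1)]
  omega

lemma latZ_adj_s16 {a b : ℤ} : latZ.Adj a b ↔ (a = b + 1 ∨ b = a + 1) := by
  show |a - b| = 1 ↔ _
  rw [abs_eq (by norm_num : (0:ℤ) ≤ 1)]
  omega

lemma kron_adj {p q : ℕ × ℕ} :
    (latN.kron latN).Adj p q ↔
      ((p.1 = q.1 + 1 ∨ q.1 = p.1 + 1) ∧ (p.2 = q.2 + 1 ∨ q.2 = p.2 + 1)) := by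
  show (latN.Adj p.1 q.1 ∧ latN.Adj p.2 q.2) ↔ _
  rw [latN_adj_s16, latN_adj_s16]

lemma parity_of_reach {p : ℕ × ℕ} (h : (latN.kron latN).Reachable (0, 0) p) :
    (p.1 + p.2) % 2 = 0 := by
  obtain ⟨w⟩ := h
  have key : ∀ {a b : ℕ × ℕ} (_ : (latN.kron latN).Walk a b),
      (a.1 + a.2) % 2 = 0 → (b.1 + b.2) % 2 = 0 := by
    intro a b w
    induction w with
    | nil => exact id
    | cons h _ ih =>
      intro he
      apply ih
      rw [kron_adj] at h
      omega
  exact key w (by simp)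

lemma reach_of_even : ∀ (n u v : ℕ), u + v = n → n % 2 = 0 →
    (latN.kron latN).Reachable (0, 0) (u, v) := by
  intro n
  induction n using Nat.strong_induction_on with
  | _ n ih =>
    intro u v hn he
    rcases Nat.eq_zero_or_pos u with hu | hu
    · subst hu
      rcases Nat.eq_zero_or_pos v with hv | hv
      · subst hv; exact SimpleGraph.Reachable.refl _
      · obtain ⟨w, rfl⟩ : ∃ w, v = w + 2 := ⟨v - 2, by omega⟩
        have h0 : (latN.kron latN).Reachable (0, 0) (0, w) :=
          ih w (by omega) 0 w (by omega) (by omega)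
        have h1 : (latN.kron latN).Adj (0, w) (1, w + 1) := by rw [kron_adj]; omega
        have h2 : (latN.kron latN).Adj (1, w + 1) (0, w + 2) := by rw [kron_adj]; omega
        exact (h0.trans h1.reachable).trans h2.reachable
    · rcases Nat.eq_zero_or_pos v with hv | hv
      · subst hv
        obtain ⟨w, rfl⟩ : ∃ w, u = w + 2 := ⟨u - 2, by omega⟩
        have h0 : (latN.kron latN).Reachable (0, 0) (w, 0) :=
          ih w (by omega) w 0 (by omega) (by omega)
        have h1 : (latN.kron latN).Adj (w, 0) (w + 1, 1) := by rw [kron_adj]; omega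
        have h2 : (latN.kron latN).Adj (w + 1, 1) (w + 2, 0) := by rw [kron_adj]; omega
        exact (h0.trans h1.reachable).trans h2.reachable
      · obtain ⟨a, rfl⟩ : ∃ a, u = a + 1 := ⟨u - 1, by omega⟩
        obtain ⟨b, rfl⟩ : ∃ b, v = b + 1 := ⟨v - 1, by omega⟩
        have h0 : (latN.kron latN).Reachable (0, 0) (a, b) :=
          ih (a + b) (by omega) a b rfl (by omega)
        have h1 : (latN.kron latN).Adj (a, b) (a + 1, b + 1) := by rw [kron_adj]; omega
        exact h0.trans h1.reachable

def coneEquiv : {p : ℕ × ℕ // (latN.kron latN).Reachable (0, 0) p} ≃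
    {q : ℤ × ℤ // -q.1 ≤ q.2 ∧ q.2 ≤ q.1} where
  toFun := fun ⟨p, hp⟩ =>
    ⟨(((p.1 : ℤ) + p.2) / 2, ((p.1 : ℤ) - p.2) / 2), by
      have h := parity_of_reach hp
      constructor <;> omega⟩
  invFun := fun ⟨q, hq⟩ =>
    ⟨((q.1 + q.2).toNat, (q.1 - q.2).toNat),
      reach_of_even _ _ _ rfl (by obtain ⟨h1, h2⟩ := hq; omega)⟩
  left_inv := by
    rintro ⟨⟨u, v⟩, hp⟩
    have h := parity_of_reach hp
    apply Subtype.ext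
    simp only [Prod.mk.injEq]
    constructor <;> omega
  right_inv := by
    rintro ⟨⟨x, y⟩, hx, hy⟩
    apply Subtype.ext
    simp only [Prod.mk.injEq]
    constructor <;> omega

theorem component_kronNN_iso_cone :
    ∃ φ : component (latN.kron latN) (0, 0) ≃g
        (latZ □ latZ).induce {p : ℤ × ℤ | -p.1 ≤ p.2 ∧ p.2 ≤ p.1},
      φ ⟨(0, 0), SimpleGraph.Reachable.refl _⟩ = ⟨(0, 0), by simp⟩ := by
  refine ⟨⟨coneEquiv, ?_⟩, ?_⟩
  · rintro ⟨⟨u, v⟩, hp⟩ ⟨⟨a, b⟩, hq⟩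
    have h1 := parity_of_reach hp
    have h2 := parity_of_reach hq
    show (latZ □ latZ).Adj (((u:ℤ) + v) / 2, ((u:ℤ) - v) / 2)
        (((a:ℤ) + b) / 2, ((a:ℤ) - b) / 2) ↔ (latN.kron latN).Adj (u, v) (a, b)
    rw [SimpleGraph.boxProd_adj, kron_adj]
    simp only [latZ_adj_s16]
    dsimp only at h1 h2 ⊢
    omega
  · apply Subtype.ext
    simp [coneEquiv]
end

section
/- For all natural numbers m, the identity ∑_{k=0}^{m} C(2m, 2k) · C(2k, k) · C(2m-2k, m-k) = C(2m, m)² holds. -/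
lemma sum_choose_sq (m : ℕ) :
    ∑ k ∈ Finset.range (m + 1), Nat.choose m k ^ 2 = Nat.choose (2 * m) m := by
  rw [two_mul, Nat.add_choose_eq, Finset.Nat.sum_antidiagonal_eq_sum_range_succ
    (f := fun i j => m.choose i * m.choose j)]
  refine Finset.sum_congr rfl fun k hk => ?_
  rw [Finset.mem_range] at hk
  rw [Nat.choose_symm (by omega : k ≤ m), sq]

theorem binom_identity (m : ℕ) :
    ∑ k ∈ Finset.range (m + 1),
        Nat.choose (2 * m) (2 * k) * Nat.choose (2 * k) k * Nat.choose (2 * m - 2 * k) (m - k)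
      = Nat.choose (2 * m) m ^ 2 := by
  have key : ∀ k ∈ Finset.range (m + 1),
      Nat.choose (2 * m) (2 * k) * Nat.choose (2 * k) k * Nat.choose (2 * m - 2 * k) (m - k)
        = Nat.choose (2 * m) m * Nat.choose m k ^ 2 := by
    intro k hk
    rw [Finset.mem_range] at hk
    have hkm : k ≤ m := by omega
    have h1 : Nat.choose (2 * m) (2 * k) * Nat.choose (2 * k) k
        = Nat.choose (2 * m) k * Nat.choose (2 * m - k) k := by
      have := Nat.choose_mul (n := 2 * m) (k := 2 * k) (s := k) (by omega)
      rw [show 2 * k - k = k from by omega] at this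
      exact this
    have h2 : Nat.choose (2 * m - k) k * Nat.choose (2 * m - 2 * k) (m - k)
        = Nat.choose (2 * m - k) m * Nat.choose m k := by
      have := Nat.choose_mul (n := 2 * m - k) (k := m) (s := k) hkm
      rw [show 2 * m - k - k = 2 * m - 2 * k from by omega, show m - k = m - k from rfl] at this
      omega
    have h3 : Nat.choose (2 * m) k * Nat.choose (2 * m - k) m
        = Nat.choose (2 * m) m * Nat.choose m k := by
      have := Nat.choose_mul (n := 2 * m) (k := m) (s := k) hkm
      have hsym : Nat.choose (2 * m - k) (m - k) = Nat.choose (2 * m - k) m := by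
        rw [← Nat.choose_symm (by omega : m ≤ 2 * m - k), show 2 * m - k - m = m - k from by omega]
      rw [hsym] at this
      omega
    calc Nat.choose (2 * m) (2 * k) * Nat.choose (2 * k) k * Nat.choose (2 * m - 2 * k) (m - k)
        = Nat.choose (2 * m) k * (Nat.choose (2 * m - k) k * Nat.choose (2 * m - 2 * k) (m - k)) := by
          rw [h1]; ring
      _ = Nat.choose (2 * m) k * Nat.choose (2 * m - k) m * Nat.choose m k := by rw [h2]; ring
      _ = Nat.choose (2 * m) m * Nat.choose m k ^ 2 := by rw [h3]; ring
  rw [Finset.sum_congr rfl key, ← Finset.mul_sum, sum_choose_sq, sq]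
end

section
/- For the path graph P₄ on 4 vertices {0,1,2,3}, the number of 2m-step closed walks at vertex 0 equals ((5-√5)/10)·((3+√5)/2)^m + ((5+√5)/10)·((3-√5)/2)^m, and the number of odd-step closed walks at 0 is 0. -/
open Real

/-- The path graph `P₄` on vertices `{0,1,2,3}` with edges `{0,1},{1,2},{2,3}`. -/
def P4 : SimpleGraph (Fin 4) where
  Adj i j := |(i.val : ℤ) - j.val| = 1
  symm := ⟨by intro i j h; rwa [abs_sub_comm]⟩
  loopless := ⟨by intro i h; simp at h⟩

instance : DecidableRel P4.Adj := fun i j =>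
  inferInstanceAs (Decidable (|((i.val : ℤ)) - j.val| = 1))

lemma adjP4 : P4.adjMatrix ℕ = !![0,1,0,0;1,0,1,0;0,1,0,1;0,0,1,0] := by
  ext i j
  fin_cases i <;> fin_cases j <;> simp [P4] <;> decide

def XY : ℕ → ℕ × ℕ
  | 0 => (1, 0)
  | m+1 => ((XY m).1 + (XY m).2, (XY m).1 + 2 * (XY m).2)

lemma rowP4 (m : ℕ) :
    (P4.adjMatrix ℕ ^ (2*m)) 0 0 = (XY m).1 ∧ (P4.adjMatrix ℕ ^ (2*m)) 0 1 = 0 ∧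
    (P4.adjMatrix ℕ ^ (2*m)) 0 2 = (XY m).2 ∧ (P4.adjMatrix ℕ ^ (2*m)) 0 3 = 0 := by
  induction m with
  | zero => simp [Matrix.one_apply, XY]
  | succ m ih =>
    obtain ⟨h0, h1, h2, h3⟩ := ih
    have e : 2 * (m+1) = 2*m + 1 + 1 := by ring
    rw [adjP4] at h0 h1 h2 h3
    rw [e, pow_succ, pow_succ, adjP4]
    simp [Matrix.mul_apply, Fin.sum_univ_four, h0, h1, h2, h3, XY,
      Matrix.vecHead, Matrix.vecTail]
    omega

lemma walkCount_eq (n : ℕ) : walkCount P4 0 n = (P4.adjMatrix ℕ ^ n) 0 0 := by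
  rw [walkCount, Nat.card_eq_fintype_card,
    SimpleGraph.adjMatrix_pow_apply_eq_card_walk]
  rfl

theorem walkCount_P4 (m : ℕ) :
    (walkCount P4 0 (2 * m) : ℝ)
        = (5 - Real.sqrt 5) / 10 * ((3 + Real.sqrt 5) / 2) ^ m
          + (5 + Real.sqrt 5) / 10 * ((3 - Real.sqrt 5) / 2) ^ m ∧
      walkCount P4 0 (2 * m + 1) = 0 := by
  have hs : Real.sqrt 5 ^ 2 = 5 := Real.sq_sqrt (by norm_num)
  obtain ⟨h0, h1, h2, h3⟩ := rowP4 m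
  constructor
  · rw [walkCount_eq, h0]
    -- closed form for XY by induction
    have key : ∀ k, ((XY k).1 : ℝ)
        = (5 - Real.sqrt 5) / 10 * ((3 + Real.sqrt 5) / 2) ^ k
          + (5 + Real.sqrt 5) / 10 * ((3 - Real.sqrt 5) / 2) ^ k ∧
        ((XY k).2 : ℝ)
        = Real.sqrt 5 / 5 * ((3 + Real.sqrt 5) / 2) ^ k
          - Real.sqrt 5 / 5 * ((3 - Real.sqrt 5) / 2) ^ k := by
      intro k
      induction k with
      | zero =>
        constructor
        · show ((1:ℕ):ℝ) = _
          push_cast; ring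
        · show ((0:ℕ):ℝ) = _
          push_cast; ring
      | succ k ih =>
        obtain ⟨ihx, ihy⟩ := ih
        constructor
        · show (((XY k).1 + (XY k).2 : ℕ) : ℝ) = _
          push_cast [ihx, ihy]
          rw [pow_succ, pow_succ]
          linear_combination ((((3 + Real.sqrt 5) / 2) ^ k + ((3 - Real.sqrt 5) / 2) ^ k) / 20) * hs
        · show (((XY k).1 + 2 * (XY k).2 : ℕ) : ℝ) = _
          push_cast [ihx, ihy]
          rw [pow_succ, pow_succ]
          linear_combination (-(((3 + Real.sqrt 5) / 2) ^ k + ((3 - Real.sqrt 5) / 2) ^ k) / 10) * hs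
    exact (key m).1
  · rw [walkCount_eq, pow_succ, adjP4, Matrix.mul_apply, Fin.sum_univ_four]
    rw [adjP4] at h0 h1 h2 h3
    simp [h0, h1, h2, h3]
end
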